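/- arXiv:math/0412361 — 3 statements merged into one kernel-verified Lean document; each statement's English description precedes it below -/
import Mathlib

section
/- Let F, G ∈ D_j be forms of degree j such that dim_K(R_1∘F + R_1∘G) ≥ 2r − 2 and the first-order partials of F and G together involve all r variables (equivalently, R_{j−1}∘⟨F,G⟩ spans D_1 = ⟨X_1,...,X_r⟩). Then for all but finitely many λ ∈ K, dim_K(R_1∘(F + λG)) = r, i.e., F + λG has r linearly independent first partial derivatives. -/
open MvPolynomial

/-- The partial derivative endomorphisms commute. -/
theorem pderiv_endo_comm {K : Type*} [CommSemiring K] {r : ℕ} (i j : Fin r)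
    (p : MvPolynomial (Fin r) K) :
    pderiv i (pderiv j p) = pderiv j (pderiv i p) := by
  induction p using MvPolynomial.induction_on with
  | C a => simp
  | add p q hp hq => simp [hp, hq]
  | mul_X p k hp =>
      have hX : ∀ a b c : Fin r,
          pderiv a (pderiv b (X c : MvPolynomial (Fin r) K)) = 0 := by
        intro a b c
        rcases eq_or_ne c b with h | h
        · subst h; rw [pderiv_X_self]; exact pderiv_one
        · rw [pderiv_X_of_ne h, map_zero]
      simp only [pderiv_mul, map_add, pderiv_mul, hp, hX]
      ring

/-- The apolarity action of `R = K[x_1,…,x_r]` on `D = K[X_1,…,X_r]` by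
partial differentiation, as an algebra map to endomorphisms. -/
noncomputable def apolHom (K : Type*) [CommSemiring K] (r : ℕ) :
    MvPolynomial (Fin r) K →ₐ[K] Module.End K (MvPolynomial (Fin r) K) :=
  letI : CommSemiring
      (Algebra.adjoin K (Set.range fun i : Fin r =>
        ((pderiv i).toLinearMap : Module.End K (MvPolynomial (Fin r) K)))) :=
    Algebra.adjoinCommSemiringOfComm K (by
      rintro a ⟨i, rfl⟩ b ⟨j, rfl⟩
      exact LinearMap.ext fun p => pderiv_endo_comm i j p)
  (Algebra.adjoin K _).val.comp
    (aeval fun i : Fin r =>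
      (⟨(pderiv i).toLinearMap, Algebra.subset_adjoin (Set.mem_range_self i)⟩ :
        Algebra.adjoin K (Set.range fun i : Fin r =>
          ((pderiv i).toLinearMap : Module.End K (MvPolynomial (Fin r) K)))))

/-- `h ∘ F`, the differentiation action. -/
noncomputable def apol {K : Type*} [CommSemiring K] {r : ℕ}
    (h F : MvPolynomial (Fin r) K) : MvPolynomial (Fin r) K :=
  apolHom K r h F

/-- The annihilator ideal of a form `F`. -/
noncomputable def annIdeal {K : Type*} [CommSemiring K] {r : ℕ}
    (F : MvPolynomial (Fin r) K) : Ideal (MvPolynomial (Fin r) K) where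
  carrier := {h | apol h F = 0}
  add_mem' := by
    intro a b ha hb
    simp only [Set.mem_setOf_eq, apol, map_add, LinearMap.add_apply] at *
    rw [ha, hb, add_zero]
  zero_mem' := by simp [apol]
  smul_mem' := by
    intro c x hx
    simp only [Set.mem_setOf_eq, apol, smul_eq_mul, map_mul, Module.End.mul_apply] at *
    rw [hx, map_zero]

/-- The annihilator ideal of a set of forms. -/
noncomputable def annSet {K : Type*} [CommSemiring K] {r : ℕ}
    (W : Set (MvPolynomial (Fin r) K)) : Ideal (MvPolynomial (Fin r) K) where
  carrier := {h | ∀ F ∈ W, apol h F = 0}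
  add_mem' := by
    intro a b ha hb F hF
    have h1 := ha F hF
    have h2 := hb F hF
    simp only [apol] at h1 h2 ⊢
    rw [map_add, LinearMap.add_apply, h1, h2, add_zero]
  zero_mem' := by intro F hF; simp [apol]
  smul_mem' := by
    intro c x hx F hF
    have h1 := hx F hF
    simp only [apol] at h1 ⊢
    rw [smul_eq_mul, map_mul, Module.End.mul_apply, h1, map_zero]

/-- `h ↦ h ∘ F` as a `K`-linear map. -/
noncomputable def apolMap {K : Type*} [CommSemiring K] {r : ℕ}
    (F : MvPolynomial (Fin r) K) :
    MvPolynomial (Fin r) K →ₗ[K] MvPolynomial (Fin r) K where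
  toFun h := apol h F
  map_add' a b := by simp [apol, map_add]
  map_smul' c a := by simp [apol, map_smul]

/-- `R_u ∘ F`, the space of `u`-th order partial derivatives of `F`. -/
noncomputable def derivSpace {K : Type*} [CommSemiring K] {r : ℕ}
    (F : MvPolynomial (Fin r) K) (u : ℕ) :
    Submodule K (MvPolynomial (Fin r) K) :=
  Submodule.map (apolMap F) (homogeneousSubmodule (Fin r) K u)

/-- The degree-`i` part of an ideal `I`, as a subspace of `R_i`. -/
noncomputable def idealPiece {K : Type*} [CommSemiring K] {r : ℕ}
    (I : Ideal (MvPolynomial (Fin r) K)) (i : ℕ) :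
    Submodule K (homogeneousSubmodule (Fin r) K i) :=
  Submodule.comap (homogeneousSubmodule (Fin r) K i).subtype (I.restrictScalars K)

/-- The Hilbert function of `R/I` in degree `i` (for a homogeneous ideal `I`):
`dim_K (R_i / I_i)`. -/
noncomputable def hilb {K : Type*} [Field K] {r : ℕ}
    (I : Ideal (MvPolynomial (Fin r) K)) (i : ℕ) : ℕ :=
  Module.finrank K ((homogeneousSubmodule (Fin r) K i) ⧸ idealPiece I i)
section Helpers

open Finsupp in
lemma degree_one_exists_single {r : ℕ} (d : Fin r →₀ ℕ)
    (h : ∑ i ∈ d.support, d i = 1) : ∃ i, d = Finsupp.single i 1 := by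
  have hne : d.support.Nonempty := by
    rcases Finset.eq_empty_or_nonempty d.support with he | hne
    · rw [he] at h; simp at h
    · exact hne
  obtain ⟨i, hi⟩ := hne
  have hdi : 1 ≤ d i := Nat.one_le_iff_ne_zero.mpr (Finsupp.mem_support_iff.mp hi)
  have hle : d i ≤ ∑ j ∈ d.support, d j :=
    Finset.single_le_sum (fun _ _ => Nat.zero_le _) hi
  refine ⟨i, Finsupp.eq_single_iff.mpr ⟨?_, by omega⟩⟩
  intro j hj
  simp only [Finset.mem_singleton]
  by_contra hji
  have hdj : 1 ≤ d j := Nat.one_le_iff_ne_zero.mpr (Finsupp.mem_support_iff.mp hj)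
  have : d i + d j ≤ ∑ k ∈ d.support, d k := by
    have : ({i, j} : Finset (Fin r)) ⊆ d.support := by
      intro k hk
      simp only [Finset.mem_insert, Finset.mem_singleton] at hk
      rcases hk with rfl | rfl <;> assumption
    calc d i + d j = ∑ k ∈ ({i, j} : Finset (Fin r)), d k := by
          rw [Finset.sum_insert (by simpa using Ne.symm hji), Finset.sum_singleton]
      _ ≤ _ := Finset.sum_le_sum_of_subset this
  omega

variable {K : Type*} [CommSemiring K] {r : ℕ}

lemma apol_X (i : Fin r) (F : MvPolynomial (Fin r) K) :
    apol (X i) F = pderiv i F := by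
  simp [apol, apolHom]

lemma apol_mul (p q F : MvPolynomial (Fin r) K) :
    apol (p * q) F = apol p (apol q F) := by
  simp [apol, map_mul, Module.End.mul_apply]

lemma apol_pderiv_comm (i : Fin r) (q p : MvPolynomial (Fin r) K) :
    pderiv i (apol q p) = apol q (pderiv i p) := by
  rw [← apol_X, ← apol_mul, mul_comm, apol_mul, apol_X]

lemma homogeneousSubmodule_one_eq_span :
    homogeneousSubmodule (Fin r) K 1
      = Submodule.span K (Set.range (X : Fin r → MvPolynomial (Fin r) K)) := by
  apply le_antisymm
  · intro p hp
    rw [mem_homogeneousSubmodule] at hp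
    rw [p.as_sum]
    refine Submodule.sum_mem _ fun d hd => ?_
    have hdeg : ∑ i ∈ d.support, d i = 1 := by
      have := hp (mem_support_iff.mp hd)
      rw [← Finsupp.degree_apply, Finsupp.degree_eq_weight_one]; exact this
    obtain ⟨i, rfl⟩ := degree_one_exists_single d hdeg
    have : (monomial (Finsupp.single i 1)) (coeff (Finsupp.single i 1) p)
        = (coeff (Finsupp.single i 1) p) • X i := by
      rw [smul_eq_C_mul, X, C_mul_monomial, mul_one]
    rw [this]
    exact Submodule.smul_mem _ _ (Submodule.subset_span ⟨i, rfl⟩)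
  · rw [Submodule.span_le]
    rintro _ ⟨i, rfl⟩
    exact (mem_homogeneousSubmodule _ _).mpr (isHomogeneous_X K i)

lemma derivSpace_one (F : MvPolynomial (Fin r) K) :
    derivSpace F 1
      = Submodule.span K (Set.range fun i : Fin r => pderiv i F) := by
  rw [derivSpace, homogeneousSubmodule_one_eq_span, Submodule.map_span,
    ← Set.range_comp]
  congr 1
  ext w
  constructor
  · rintro ⟨i, rfl⟩; exact ⟨i, (apol_X i F).symm⟩
  · rintro ⟨i, rfl⟩; exact ⟨i, apol_X i F⟩

lemma apol_sum_smul (a : Fin r → K) (q p : MvPolynomial (Fin r) K) :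
    (∑ i, a i • pderiv i (apol q p)) = apol q (∑ i, a i • pderiv i p) := by
  simp only [apol, map_sum, map_smul]
  refine Finset.sum_congr rfl fun i _ => ?_
  congr 1
  exact apol_pderiv_comm i q p

lemma apol_ann (a : Fin r → K) (F : MvPolynomial (Fin r) K)
    (h : (∑ i, a i • pderiv i F) = 0) (u : ℕ)
    (w : MvPolynomial (Fin r) K) (hw : w ∈ derivSpace F u) :
    ∑ i, a i • pderiv i w = 0 := by
  obtain ⟨g, _, rfl⟩ := hw
  show ∑ i, a i • pderiv i (apol g F) = 0
  rw [apol_sum_smul, h]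
  simp [apol]

end Helpers

/-- Corollary 2.4: if `F, G` together have at least `2r - 2` linearly
independent first partials and involve all `r` variables (i.e. `R_{j-1}∘⟨F,G⟩` spans
`D_1`), then for all but finitely many `λ ∈ K`, `F + λG` has `r` linearly independent
first partial derivatives. -/
theorem generic_full_first_partials {K : Type*} [Field K] [CharZero K] {r j : ℕ}
    (hr : 1 ≤ r) (hj : 0 < j)
    (F G : MvPolynomial (Fin r) K) (hF : F.IsHomogeneous j) (hG : G.IsHomogeneous j)
    (h1 : 2 * r - 2 ≤ Module.finrank K ↥(derivSpace F 1 ⊔ derivSpace G 1))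
    (h2 : derivSpace F (j - 1) ⊔ derivSpace G (j - 1)
        = homogeneousSubmodule (Fin r) K 1) :
    {c : K | ¬ Module.finrank K ↥(derivSpace (F + c • G) 1) = r}.Finite := by
  classical
  set P := Fintype.linearCombination K (fun i : Fin r => pderiv i F) with hPdef
  set Q := Fintype.linearCombination K (fun i : Fin r => pderiv i G) with hQdef
  by_contra hfin
  have hinf : {c : K | ¬ Module.finrank K ↥(derivSpace (F + c • G) 1) = r}.Infinite := hfin
  -- expansion of the partials of F + c • G
  have hexp : ∀ (c : K) (g : Fin r → K),
      (∑ i, g i • pderiv i (F + c • G)) = P g + c • Q g := by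
    intro c g
    rw [hPdef, hQdef, Fintype.linearCombination_apply, Fintype.linearCombination_apply,
      Finset.smul_sum, ← Finset.sum_add_distrib]
    refine Finset.sum_congr rfl fun i _ => ?_
    rw [map_add, Derivation.map_smul, smul_add, smul_comm c (g i)]
  -- witnesses for bad values of c
  have hwit : ∀ c ∈ {c : K | ¬ Module.finrank K ↥(derivSpace (F + c • G) 1) = r},
      ∃ a : Fin r → K, a ≠ 0 ∧ P a + c • Q a = 0 := by
    intro c hc
    simp only [Set.mem_setOf_eq] at hc
    by_contra hno
    push_neg at hno
    apply hc
    have hli : LinearIndependent K (fun i : Fin r => pderiv i (F + c • G)) := by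
      refine Fintype.linearIndependent_iff.mpr fun g hg => ?_
      by_contra hgi
      push_neg at hgi
      obtain ⟨i, hi⟩ := hgi
      have hgne : g ≠ 0 := fun h => hi (by rw [h]; rfl)
      exact hno g hgne (by rw [← hexp c g]; exact hg)
    have hcard := linearIndependent_iff_card_eq_finrank_span.mp hli
    rw [Fintype.card_fin] at hcard
    rw [derivSpace_one]
    exact hcard.symm
  choose a ha0 harel using hwit
  -- the coproduct map and its kernel
  have hker : ∀ (c : K) (hc : c ∈ {c : K | ¬ Module.finrank K ↥(derivSpace (F + c • G) 1) = r}),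
      (a c hc, c • a c hc) ∈ LinearMap.ker (LinearMap.coprod P Q) := by
    intro c hc
    rw [LinearMap.mem_ker, LinearMap.coprod_apply, map_smul]
    exact harel c hc
  by_cases hcase : ∃ c₁, ∃ (hc₁ : c₁ ∈ {c : K | ¬ Module.finrank K ↥(derivSpace (F + c • G) 1) = r}),
      ∃ c₂, ∃ (hc₂ : c₂ ∈ {c : K | ¬ Module.finrank K ↥(derivSpace (F + c • G) 1) = r}),
      a c₂ hc₂ ∉ Submodule.span K {a c₁ hc₁}
  · -- Case A : two independent witnesses
    obtain ⟨c₁, hc₁, c₂, hc₂, hindep⟩ := hcase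
    have hne12 : c₁ ≠ c₂ := by
      rintro rfl
      exact hindep (Submodule.mem_span_singleton_self _)
    -- independence of the two witness vectors
    have hab : ∀ α β : K, α • a c₁ hc₁ + β • a c₂ hc₂ = 0 → α = 0 ∧ β = 0 := by
      intro α β hst
      by_cases hβ : β = 0
      · subst hβ
        rw [zero_smul, add_zero] at hst
        exact ⟨(smul_eq_zero.mp hst).resolve_right (ha0 c₁ hc₁), rfl⟩
      · exfalso
        apply hindep
        refine Submodule.mem_span_singleton.mpr ⟨-(β⁻¹ * α), ?_⟩
        apply smul_right_injective (Fin r → K) hβ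
        show β • (-(β⁻¹ * α) • a c₁ hc₁) = β • a c₂ hc₂
        rw [smul_smul, mul_neg, ← mul_assoc, mul_inv_cancel₀ hβ, one_mul, neg_smul]
        exact neg_eq_of_add_eq_zero_right hst
    -- a third bad value
    obtain ⟨c₃, hc₃mem⟩ :=
      (hinf.diff ((Set.finite_singleton c₂).insert c₁)).nonempty
    obtain ⟨hc₃, hc₃ne⟩ := hc₃mem
    have hne31 : c₃ ≠ c₁ := fun h => hc₃ne (by simp [h])
    have hne32 : c₃ ≠ c₂ := fun h => hc₃ne (by simp [h])
    -- kernel has dimension at most 2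
    have hrn := LinearMap.finrank_range_add_finrank_ker (LinearMap.coprod P Q)
    have hdom : Module.finrank K ((Fin r → K) × (Fin r → K)) = r + r := by
      rw [Module.finrank_prod, Module.finrank_pi, Fintype.card_fin]
    have hrange : LinearMap.range (LinearMap.coprod P Q)
        = derivSpace F 1 ⊔ derivSpace G 1 := by
      rw [LinearMap.range_coprod, hPdef, hQdef, Fintype.range_linearCombination,
        Fintype.range_linearCombination, ← derivSpace_one, ← derivSpace_one]
    rw [hdom, hrange] at hrn
    have hker2 : Module.finrank K (LinearMap.ker (LinearMap.coprod P Q)) ≤ 2 := by omega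
    set v₁ : (Fin r → K) × (Fin r → K) := (a c₁ hc₁, c₁ • a c₁ hc₁) with hv₁
    set v₂ : (Fin r → K) × (Fin r → K) := (a c₂ hc₂, c₂ • a c₂ hc₂) with hv₂
    have hli2 : LinearIndependent K ![v₁, v₂] := by
      rw [LinearIndependent.pair_iff]
      intro s t hst
      have h1' : s • a c₁ hc₁ + t • a c₂ hc₂ = 0 := congrArg Prod.fst hst
      exact hab s t h1'
    have hr2 : Set.range ![v₁, v₂] = {v₁, v₂} := by
      ext x
      simp [Fin.exists_fin_two, or_comm]
    have hsp : Submodule.span K {v₁, v₂} ≤ LinearMap.ker (LinearMap.coprod P Q) := by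
      rw [Submodule.span_le]
      rintro x hx
      rcases hx with rfl | rfl
      · exact hker c₁ hc₁
      · exact hker c₂ hc₂
    have hfr : Module.finrank K (Submodule.span K ({v₁, v₂} : Set _)) = 2 := by
      have := finrank_span_eq_card hli2
      rw [hr2] at this
      simpa using this
    have heq : Submodule.span K ({v₁, v₂} : Set _) = LinearMap.ker (LinearMap.coprod P Q) :=
      Submodule.eq_of_le_of_finrank_le hsp (by rw [hfr]; exact hker2)
    obtain ⟨s, t, hst⟩ := Submodule.mem_span_pair.mp (heq ▸ hker c₃ hc₃)
    have hfst : s • a c₁ hc₁ + t • a c₂ hc₂ = a c₃ hc₃ := congrArg Prod.fst hst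
    have hsnd : s • (c₁ • a c₁ hc₁) + t • (c₂ • a c₂ hc₂) = c₃ • a c₃ hc₃ :=
      congrArg Prod.snd hst
    have hkey : (s * (c₁ - c₃)) • a c₁ hc₁ + (t * (c₂ - c₃)) • a c₂ hc₂ = 0 := by
      funext i
      have e1 := congrFun hfst i
      have e2 := congrFun hsnd i
      simp only [Pi.add_apply, Pi.smul_apply, smul_eq_mul, Pi.zero_apply] at e1 e2 ⊢
      linear_combination e2 - c₃ * e1
    obtain ⟨hs0, ht0⟩ := hab _ _ hkey
    have hs : s = 0 := by
      rcases mul_eq_zero.mp hs0 with h | h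
      · exact h
      · exact absurd (sub_eq_zero.mp h) (fun he => hne31 he.symm)
    have ht : t = 0 := by
      rcases mul_eq_zero.mp ht0 with h | h
      · exact h
      · exact absurd (sub_eq_zero.mp h) (fun he => hne32 he.symm)
    apply ha0 c₃ hc₃
    rw [← hfst, hs, ht, zero_smul, zero_smul, add_zero]
  · -- Case B : all witnesses are proportional; get a common annihilator
    push_neg at hcase
    obtain ⟨c₁, hc₁, c₂, hc₂, hne12⟩ := hinf.nontrivial
    obtain ⟨μ, hμ⟩ := Submodule.mem_span_singleton.mp (hcase c₁ hc₁ c₂ hc₂)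
    have hμ0 : μ ≠ 0 := by
      rintro rfl
      exact ha0 c₂ hc₂ (by rw [← hμ, zero_smul])
    have r2 : P (a c₁ hc₁) + c₂ • Q (a c₁ hc₁) = 0 := by
      have h := harel c₂ hc₂
      rw [← hμ, map_smul, map_smul, smul_comm c₂ μ, ← smul_add] at h
      exact (smul_eq_zero.mp h).resolve_left hμ0
    have hQ0 : Q (a c₁ hc₁) = 0 := by
      have h3 : (c₁ - c₂) • Q (a c₁ hc₁)
          = (P (a c₁ hc₁) + c₁ • Q (a c₁ hc₁)) - (P (a c₁ hc₁) + c₂ • Q (a c₁ hc₁)) := by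
        rw [sub_smul]; abel
      rw [harel c₁ hc₁, r2, sub_zero] at h3
      exact (smul_eq_zero.mp h3).resolve_left (sub_ne_zero.mpr hne12)
    have hP0 : P (a c₁ hc₁) = 0 := by
      have h := harel c₁ hc₁
      rwa [hQ0, smul_zero, add_zero] at h
    -- translate into sums of partials
    have hPF : (∑ i, a c₁ hc₁ i • pderiv i F) = 0 := by
      have h := hP0
      rw [hPdef, Fintype.linearCombination_apply] at h
      exact h
    have hQG : (∑ i, a c₁ hc₁ i • pderiv i G) = 0 := by
      have h := hQ0
      rw [hQdef, Fintype.linearCombination_apply] at h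
      exact h
    -- the annihilator kills D₁, so a c₁ hc₁ = 0
    apply ha0 c₁ hc₁
    funext k
    have hx : (X k : MvPolynomial (Fin r) K)
        ∈ derivSpace F (j - 1) ⊔ derivSpace G (j - 1) := by
      rw [h2]
      exact (mem_homogeneousSubmodule _ _).mpr (isHomogeneous_X K k)
    obtain ⟨w₁, hw₁, w₂, hw₂, hsum⟩ := Submodule.mem_sup.mp hx
    have z1 := apol_ann (a c₁ hc₁) F hPF (j - 1) w₁ hw₁
    have z2 := apol_ann (a c₁ hc₁) G hQG (j - 1) w₂ hw₂
    have hz : (∑ i, a c₁ hc₁ i • pderiv i (X k : MvPolynomial (Fin r) K)) = 0 := by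
      rw [← hsum]
      simp only [map_add, smul_add, Finset.sum_add_distrib, z1, z2, add_zero]
    rw [Finset.sum_eq_single k (fun i _ hik => by
        rw [pderiv_X_of_ne (Ne.symm hik), smul_zero])
      (fun h => absurd (Finset.mem_univ k) h)] at hz
    rw [pderiv_X_self] at hz
    have := (smul_eq_zero.mp hz).resolve_right (one_ne_zero)
    simpa using this
end

section
/- Let W ⊆ D_j be a t-dimensional space of degree-j forms with t ≥ 2, let A = R/Ann(W), and let V ⊂ W be a codimension-one subspace with B_V = R/Ann(V). Then there is a surjection of graded R-modules A → B_V whose kernel C satisfies: the dual module of C is a cyclic R-module (generated by a single element). In particular H(A) = H(B_V) + H(C). -/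
open MvPolynomial

/-- Type synonym: `D` viewed as a module over `R` via the apolarity action. -/
def DMod (K : Type*) [CommSemiring K] (r : ℕ) := MvPolynomial (Fin r) K

noncomputable instance {K : Type*} [CommSemiring K] {r : ℕ} : AddCommMonoid (DMod K r) :=
  inferInstanceAs (AddCommMonoid (MvPolynomial (Fin r) K))

/-- The `R`-module structure on `D` given by `h • F = h ∘ F`. -/
noncomputable instance {K : Type*} [CommSemiring K] {r : ℕ} :
    Module (MvPolynomial (Fin r) K) (DMod K r) :=
  Module.compHom (MvPolynomial (Fin r) K) (apolHom K r).toRingHom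

/-- `R ∘ W ⊆ D`, the `R`-submodule of `D` generated by a subspace `W` of forms
(the dualizing module of `R/Ann W`). -/
noncomputable def dualMod {K : Type*} [CommSemiring K] {r : ℕ}
    (W : Submodule K (MvPolynomial (Fin r) K)) :
    Submodule (MvPolynomial (Fin r) K) (DMod K r) :=
  Submodule.span (MvPolynomial (Fin r) K)
    ((fun F => (F : DMod K r)) '' (W : Set (MvPolynomial (Fin r) K)))

noncomputable instance {K : Type*} [CommRing K] {r : ℕ} : AddCommGroup (DMod K r) :=
  inferInstanceAs (AddCommGroup (MvPolynomial (Fin r) K))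
section Aux

variable {K : Type*} [Field K] {r : ℕ}

lemma fd_homog (i : ℕ) : FiniteDimensional K (homogeneousSubmodule (Fin r) K i) :=
  Submodule.finiteDimensional_of_le (S₂ := restrictTotalDegree (Fin r) K i)
    (fun p hp => (mem_restrictTotalDegree _ _ _).2
      (MvPolynomial.IsHomogeneous.totalDegree_le hp))

lemma apol_C (c : K) (F : MvPolynomial (Fin r) K) :
    apolHom K r (MvPolynomial.C c) F = c • F := by
  rw [show (MvPolynomial.C c : MvPolynomial (Fin r) K) = algebraMap K _ c from rfl,
    AlgHom.commutes, Module.algebraMap_end_apply]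

/-- Explicit identity map into the type synonym `DMod`. -/
def toD {K : Type*} [CommSemiring K] {r : ℕ} (F : MvPolynomial (Fin r) K) : DMod K r := F

/-- Explicit identity map out of the type synonym `DMod`. -/
def ofD {K : Type*} [CommSemiring K] {r : ℕ} (F : DMod K r) : MvPolynomial (Fin r) K := F

lemma toD_add (F G : MvPolynomial (Fin r) K) : toD (F + G) = toD F + toD G := rfl

lemma smul_C_toD (c : K) (F : MvPolynomial (Fin r) K) :
    (MvPolynomial.C c : MvPolynomial (Fin r) K) • toD F = toD (c • F) :=
  apol_C c F

end Aux

set_option maxHeartbeats 1000000 in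
set_option synthInstance.maxHeartbeats 1000000 in
/-- Lemma 2.5: for `W ⊆ D_j` of dimension `t ≥ 2`, `A = R/Ann W`, and a
codimension-one subspace `V ⊂ W` with `B_V = R/Ann V`, the canonical surjection
`A → B_V` has kernel `C` whose dual module `(R∘W)/(R∘V)` is a cyclic `R`-module;
in particular `H(A) = H(B_V) + H(C)`. -/
theorem codim_one_quotient {K : Type*} [Field K] [CharZero K] {r j t : ℕ} (ht : 2 ≤ t)
    (W V : Submodule K (MvPolynomial (Fin r) K))
    (hWhom : ∀ F ∈ W, MvPolynomial.IsHomogeneous F j)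
    (hdimW : Module.finrank K W = t) (hVW : V ≤ W)
    (hdimV : Module.finrank K V + 1 = t)
    (hle : (annSet (W : Set (MvPolynomial (Fin r) K)) :
        Submodule (MvPolynomial (Fin r) K) (MvPolynomial (Fin r) K))
      ≤ Submodule.comap LinearMap.id
          (annSet (V : Set (MvPolynomial (Fin r) K)) :
            Submodule (MvPolynomial (Fin r) K) (MvPolynomial (Fin r) K))) :
    Function.Surjective
      (Submodule.mapQ
        (annSet (W : Set (MvPolynomial (Fin r) K)) :
          Submodule (MvPolynomial (Fin r) K) (MvPolynomial (Fin r) K))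
        (annSet (V : Set (MvPolynomial (Fin r) K)) :
          Submodule (MvPolynomial (Fin r) K) (MvPolynomial (Fin r) K))
        LinearMap.id hle) ∧
    (∃ x : ↥(dualMod W) ⧸ Submodule.comap (dualMod W).subtype (dualMod V),
      Submodule.span (MvPolynomial (Fin r) K) {x} = ⊤) ∧
    (∀ i : ℕ, hilb (annSet (W : Set (MvPolynomial (Fin r) K))) i
        = hilb (annSet (V : Set (MvPolynomial (Fin r) K))) i
          + (Module.finrank K ↥(idealPiece (annSet (V : Set (MvPolynomial (Fin r) K))) i)
            - Module.finrank K ↥(idealPiece (annSet (W : Set (MvPolynomial (Fin r) K))) i))) := by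
  classical
  refine ⟨?_, ?_, ?_⟩
  · -- surjectivity of the quotient map
    intro b
    obtain ⟨x, rfl⟩ := Submodule.Quotient.mk_surjective _ b
    exact ⟨Submodule.Quotient.mk x, by rw [Submodule.mapQ_apply]; rfl⟩
  · -- cyclicity of the dual module of the kernel
    haveI := fd_homog (K := K) (r := r) j
    have hWle : W ≤ homogeneousSubmodule (Fin r) K j := fun F hF =>
      (mem_homogeneousSubmodule _ _).2 (hWhom F hF)
    haveI : FiniteDimensional K W := Submodule.finiteDimensional_of_le hWle
    have hVne : V ≠ W := by
      intro h
      rw [h, hdimW] at hdimV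
      omega
    obtain ⟨F₀, hF₀W, hF₀V⟩ := SetLike.exists_of_lt (lt_of_le_of_ne hVW hVne)
    have hle2 : V ⊔ Submodule.span K {F₀} ≤ W :=
      sup_le hVW (Submodule.span_le.2 (Set.singleton_subset_iff.2 hF₀W))
    haveI : FiniteDimensional K ↥(V ⊔ Submodule.span K {F₀}) :=
      Submodule.finiteDimensional_of_le hle2
    have hlt : V < V ⊔ Submodule.span K {F₀} := by
      refine lt_of_le_of_ne le_sup_left ?_
      intro h
      have hm : F₀ ∈ V ⊔ Submodule.span K {F₀} :=
        Submodule.mem_sup_right (Submodule.mem_span_singleton_self F₀)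
      rw [← h] at hm
      exact hF₀V hm
    have h1 : Module.finrank K V < Module.finrank K ↥(V ⊔ Submodule.span K {F₀}) :=
      Submodule.finrank_lt_finrank_of_lt hlt
    have hsup : V ⊔ Submodule.span K {F₀} = W :=
      Submodule.eq_of_le_of_finrank_le hle2 (by rw [hdimW]; omega)
    have hgmem : toD F₀ ∈ dualMod W :=
      Submodule.subset_span (Set.mem_image_of_mem _ hF₀W)
    set g : ↥(dualMod W) := ⟨toD F₀, hgmem⟩ with hg
    refine ⟨Submodule.Quotient.mk g, ?_⟩
    rw [Submodule.eq_top_iff']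
    intro y
    obtain ⟨⟨F, hF⟩, rfl⟩ := Submodule.Quotient.mk_surjective _ y
    have key : dualMod W ≤ dualMod V ⊔
        Submodule.span (MvPolynomial (Fin r) K) {toD F₀} := by
      apply Submodule.span_le.2
      rintro x hx
      obtain ⟨G, hG, rfl⟩ := hx
      have hG2 : ofD G ∈ V ⊔ Submodule.span K {F₀} := by rw [hsup]; exact hG
      obtain ⟨v, hv, s, hs, hGeq⟩ := Submodule.mem_sup.1 hG2
      obtain ⟨c, rfl⟩ := Submodule.mem_span_singleton.1 hs
      show toD (ofD G) ∈ _
      have h3 : toD (ofD G) = toD v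
          + (MvPolynomial.C c : MvPolynomial (Fin r) K) • toD F₀ := by
        rw [smul_C_toD, ← toD_add, hGeq]
      rw [h3]
      exact Submodule.add_mem _
        (Submodule.mem_sup_left (Submodule.subset_span (Set.mem_image_of_mem _ hv)))
        (Submodule.mem_sup_right
          (Submodule.smul_mem _ _ (Submodule.mem_span_singleton_self _)))
    obtain ⟨v, hv, s, hs, hvs⟩ := Submodule.mem_sup.1 (key hF)
    obtain ⟨h, rfl⟩ := Submodule.mem_span_singleton.1 hs
    have hvW : v ∈ dualMod W := by
      have hveq : v = F - h • toD F₀ := by rw [← hvs]; abel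
      rw [hveq]
      exact Submodule.sub_mem _ hF (Submodule.smul_mem _ _ hgmem)
    have hdecomp : (⟨F, hF⟩ : ↥(dualMod W)) = ⟨v, hvW⟩ + h • g := by
      apply Subtype.ext
      show F = v + h • toD F₀
      exact hvs.symm
    have h0 : (Submodule.Quotient.mk (⟨v, hvW⟩ : ↥(dualMod W)) :
        ↥(dualMod W) ⧸ Submodule.comap (dualMod W).subtype (dualMod V)) = 0 :=
      (Submodule.Quotient.mk_eq_zero _).2 hv
    rw [hdecomp, Submodule.Quotient.mk_add, h0, zero_add, Submodule.Quotient.mk_smul]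
    exact Submodule.smul_mem _ _
      (Submodule.mem_span_singleton_self _)
  · -- Hilbert function identity
    intro i
    haveI := fd_homog (K := K) (r := r) i
    set AW := annSet (W : Set (MvPolynomial (Fin r) K))
    set AV := annSet (V : Set (MvPolynomial (Fin r) K))
    have hsub : idealPiece AW i ≤ idealPiece AV i := by
      intro p hp
      exact hle hp
    have hab : Module.finrank K ↥(idealPiece AW i) ≤ Module.finrank K ↥(idealPiece AV i) :=
      Submodule.finrank_mono hsub
    have hbd : Module.finrank K ↥(idealPiece AV i)
        ≤ Module.finrank K (homogeneousSubmodule (Fin r) K i) :=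
      Submodule.finrank_le _
    have eq1 := Submodule.finrank_quotient_add_finrank (idealPiece AW i)
    have eq2 := Submodule.finrank_quotient_add_finrank (idealPiece AV i)
    show Module.finrank K ((homogeneousSubmodule (Fin r) K i) ⧸ idealPiece AW i)
        = Module.finrank K ((homogeneousSubmodule (Fin r) K i) ⧸ idealPiece AV i) + _
    omega
end

section
/- Let r = 3, R = K[x,y,z], D = K[X,Y,Z], and for parameters a, b ∈ K with (a,b) ≠ (0,0) set F = X³Y + X²Z² + aXZ³ + bYZ³ and G = X³Z + X²Y² + X²YZ + 3aXY²Z + bY³Z. Then for every λ ∈ K, the element y² − λz² ∈ R_2 annihilates F + λG: (y² − λz²)∘(F + λG) = 0. Consequently dim_K R_2∘(F+λG) ≤ 5 < 6, so the generic Gorenstein quotient R/Ann(F+λG) is not compressed of socle degree 4. -/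
open MvPolynomial

section Helpers

variable {K : Type*} [CommSemiring K] {r : ℕ}

lemma apolHom_X (i : Fin r) :
    apolHom K r (X i) = (pderiv i).toLinearMap := by
  simp [apolHom]

lemma apol_smul (c : K) (p F : MvPolynomial (Fin r) K) :
    apol (c • p) F = c • apol p F := by
  simp [apol, map_smul]

lemma apol_add (p q F : MvPolynomial (Fin r) K) :
    apol (p + q) F = apol p F + apol q F := by
  simp [apol, map_add]

lemma apol_smul_right (c : K) (p F : MvPolynomial (Fin r) K) :
    apol p (c • F) = c • apol p F := by
  simp [apol, map_smul]

lemma apol_add_right (p F G : MvPolynomial (Fin r) K) :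
    apol p (F + G) = apol p F + apol p G := by
  simp [apol, map_add]

lemma degree_sum3 (d : Fin 3 →₀ ℕ) (h : Finsupp.weight (1 : Fin 3 → ℕ) d = 2) :
    d 0 + d 1 + d 2 = 2 := by
  rw [Finsupp.weight_apply, Finsupp.sum_fintype] at h
  · simpa [Fin.sum_univ_three] using h
  · simp

lemma finsupp_fin3_decomp (d : Fin 3 →₀ ℕ) :
    d = Finsupp.single 0 (d 0) + Finsupp.single 1 (d 1) + Finsupp.single 2 (d 2) := by
  ext i
  fin_cases i <;> simp [Finsupp.single_apply]

lemma monomial_eq_smul (d : Fin 3 →₀ ℕ) (c : K) :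
    (monomial d c : MvPolynomial (Fin 3) K)
      = c • ((X 0) ^ (d 0) * (X 1) ^ (d 1) * (X 2) ^ (d 2)) := by
  conv_lhs => rw [finsupp_fin3_decomp d]
  rw [smul_eq_C_mul]
  rw [X_pow_eq_monomial, X_pow_eq_monomial, X_pow_eq_monomial,
    monomial_mul, monomial_mul, C_mul_monomial]
  simp

end Helpers


lemma apol_sub {K : Type*} [CommRing K] {r : ℕ} (p q F : MvPolynomial (Fin r) K) :
    apol (p - q) F = apol p F - apol q F := by
  simp [apol, map_sub]

lemma apol_sum {K : Type*} [CommSemiring K] {r : ℕ} {ι : Type*} (t : Finset ι)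
    (f : ι → MvPolynomial (Fin r) K) (F : MvPolynomial (Fin r) K) :
    apol (∑ i ∈ t, f i) F = ∑ i ∈ t, apol (f i) F := by
  simp [apol, map_sum]

lemma pderiv_ofNat' {K : Type*} [CommSemiring K] {r : ℕ} (i : Fin r) (n : ℕ) [n.AtLeastTwo] :
    pderiv i (OfNat.ofNat n : MvPolynomial (Fin r) K) = 0 := by
  rw [(map_ofNat (C : K →+* MvPolynomial (Fin r) K) n).symm]
  exact pderiv_C

lemma pderiv_natCast' {K : Type*} [CommSemiring K] {r : ℕ} (i : Fin r) (n : ℕ) :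
    pderiv i ((n : MvPolynomial (Fin r) K)) = 0 := by
  rw [(map_natCast (C : K →+* MvPolynomial (Fin r) K) n).symm]
  exact pderiv_C

/-- Example 2.9: for `F = X³Y + X²Z² + aXZ³ + bYZ³` and
`G = X³Z + X²Y² + X²YZ + 3aXY²Z + bY³Z` with `(a,b) ≠ (0,0)`,
`(y² - λz²)∘(F + λG) = 0` for every `λ`, hence `dim R_2∘(F + λG) ≤ 5 < 6` and the
Gorenstein quotient `R/Ann(F + λG)` is not compressed of socle degree 4. -/
theorem example_not_compressed {K : Type*} [Field K] [CharZero K] (a b : K)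
    (hab : ¬ (a = 0 ∧ b = 0)) (F G : MvPolynomial (Fin 3) K)
    (hF : F = (X 0) ^ 3 * X 1 + (X 0) ^ 2 * (X 2) ^ 2 + a • (X 0 * (X 2) ^ 3)
        + b • (X 1 * (X 2) ^ 3))
    (hG : G = (X 0) ^ 3 * X 2 + (X 0) ^ 2 * (X 1) ^ 2 + (X 0) ^ 2 * X 1 * X 2
        + (3 * a) • (X 0 * (X 1) ^ 2 * X 2) + b • ((X 1) ^ 3 * X 2)) :
    ∀ c : K,
      apol ((X 1) ^ 2 - c • (X 2) ^ 2 : MvPolynomial (Fin 3) K) (F + c • G) = 0 ∧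
      Module.finrank K ↥(derivSpace (F + c • G) 2) ≤ 5 := by
  intro c
  have key : apol ((X 1) ^ 2 - c • (X 2) ^ 2 : MvPolynomial (Fin 3) K) (F + c • G) = 0 := by
    have e : apol ((X 1) ^ 2 - c • (X 2) ^ 2 : MvPolynomial (Fin 3) K) (F + c • G)
        = pderiv 1 (pderiv 1 (F + c • G)) - c • pderiv 2 (pderiv 2 (F + c • G)) := by
      rw [apol_sub, apol_smul, sq, sq, apol_mul, apol_mul, apol_X, apol_X, apol_X, apol_X]
    rw [e, hF, hG]
    simp only [smul_eq_C_mul]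
    simp only [map_add, pderiv_mul, pderiv_pow, pderiv_C, pderiv_X_self,
      pderiv_X_of_ne (by decide : (0:Fin 3) ≠ 1), pderiv_X_of_ne (by decide : (2:Fin 3) ≠ 1),
      pderiv_X_of_ne (by decide : (0:Fin 3) ≠ 2), pderiv_X_of_ne (by decide : (1:Fin 3) ≠ 2),
      pderiv_one, pderiv_ofNat', pderiv_natCast', mul_one, one_mul, mul_zero, zero_mul,
      add_zero, zero_add]
    simp only [C_mul, map_ofNat]
    ring
  refine ⟨key, ?_⟩
  set Φ : MvPolynomial (Fin 3) K := F + c • G with hΦ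
  have hrel : apol (X 1 * X 1 : MvPolynomial (Fin 3) K) Φ
      = c • apol (X 2 * X 2 : MvPolynomial (Fin 3) K) Φ := by
    have := key
    rw [apol_sub, apol_smul, sub_eq_zero, sq, sq] at this
    exact this
  set v : Fin 5 → MvPolynomial (Fin 3) K :=
    ![apol (X 0 * X 0) Φ, apol (X 0 * X 1) Φ, apol (X 0 * X 2) Φ,
      apol (X 1 * X 2) Φ, apol (X 2 * X 2) Φ] with hv
  have hsub : derivSpace Φ 2 ≤ Submodule.span K (Set.range v) := by
    rintro q ⟨p, hp, rfl⟩
    have hph : MvPolynomial.IsHomogeneous p 2 := hp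
    show apol p Φ ∈ Submodule.span K (Set.range v)
    have hrw : apol p Φ = ∑ d ∈ p.support, apol (monomial d (coeff d p)) Φ := by
      conv_lhs => rw [p.as_sum]
      exact apol_sum _ _ _
    rw [hrw]
    refine Submodule.sum_mem _ fun d hd => ?_
    have hdeg : d 0 + d 1 + d 2 = 2 :=
      degree_sum3 d (hph (mem_support_iff.mp hd))
    rw [monomial_eq_smul, apol_smul]
    refine Submodule.smul_mem _ _ ?_
    have hcases : (d 0 = 2 ∧ d 1 = 0 ∧ d 2 = 0) ∨ (d 0 = 1 ∧ d 1 = 1 ∧ d 2 = 0)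
        ∨ (d 0 = 1 ∧ d 1 = 0 ∧ d 2 = 1) ∨ (d 0 = 0 ∧ d 1 = 2 ∧ d 2 = 0)
        ∨ (d 0 = 0 ∧ d 1 = 1 ∧ d 2 = 1) ∨ (d 0 = 0 ∧ d 1 = 0 ∧ d 2 = 2) := by omega
    rcases hcases with ⟨h0, h1, h2⟩ | ⟨h0, h1, h2⟩ | ⟨h0, h1, h2⟩ | ⟨h0, h1, h2⟩
      | ⟨h0, h1, h2⟩ | ⟨h0, h1, h2⟩ <;> rw [h0, h1, h2]
    · rw [show ((X 0)^2 * (X 1)^0 * (X 2)^0 : MvPolynomial (Fin 3) K) = X 0 * X 0 by ring]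
      exact Submodule.subset_span ⟨0, rfl⟩
    · rw [show ((X 0)^1 * (X 1)^1 * (X 2)^0 : MvPolynomial (Fin 3) K) = X 0 * X 1 by ring]
      exact Submodule.subset_span ⟨1, rfl⟩
    · rw [show ((X 0)^1 * (X 1)^0 * (X 2)^1 : MvPolynomial (Fin 3) K) = X 0 * X 2 by ring]
      exact Submodule.subset_span ⟨2, rfl⟩
    · rw [show ((X 0)^0 * (X 1)^2 * (X 2)^0 : MvPolynomial (Fin 3) K) = X 1 * X 1 by ring,
        hrel]
      exact Submodule.smul_mem _ _ (Submodule.subset_span ⟨4, rfl⟩)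
    · rw [show ((X 0)^0 * (X 1)^1 * (X 2)^1 : MvPolynomial (Fin 3) K) = X 1 * X 2 by ring]
      exact Submodule.subset_span ⟨3, rfl⟩
    · rw [show ((X 0)^0 * (X 1)^0 * (X 2)^2 : MvPolynomial (Fin 3) K) = X 2 * X 2 by ring]
      exact Submodule.subset_span ⟨4, rfl⟩
  haveI : FiniteDimensional K (Submodule.span K (Set.range v)) :=
    FiniteDimensional.span_of_finite K (Set.finite_range v)
  calc Module.finrank K ↥(derivSpace Φ 2)
      ≤ Module.finrank K ↥(Submodule.span K (Set.range v)) := Submodule.finrank_mono hsub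
    _ ≤ Fintype.card (Fin 5) := finrank_range_le_card v
    _ ≤ 5 := by simp
end
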